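/- arXiv:1705.03914 — 2 statements merged into one kernel-verified Lean document; each statement's English description precedes it below -/
import Mathlib

section
/- (Fernique's theorem, general version) Let V be a separable topological vector space and φ: V → [0,∞] Borel measurable. Suppose there are constants c ≥ 1 and c₁, c₂ > 1 with φ(−x) = φ(x), c₂ φ(x) ≤ φ(√2 x) ≤ c₁ φ(x), and φ(x+y) ≤ c(φ(x) + φ(y)) for all x, y ∈ V. Let X be a V-valued random variable such that if Y is an independent copy of X then (φ(X), φ(Y)) has the same joint distribution as (φ((X−Y)/√2), φ((X+Y)/√2)). If P(φ(X) < ∞) = 1, then there exist α, β > 0 with E[exp(α φ(X)^β)] < ∞. -/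
open MeasureTheory ProbabilityTheory


noncomputable def ferniqueSeq (C C₁ S : ENNReal) : ℕ → ENNReal
  | 0 => S
  | n + 1 => C * (C₁ * ferniqueSeq C C₁ S n + S)

def ferniqueSet {Ω : Type*} (Z : Ω → ENNReal) (R : ℕ → ENNReal) (S : ENNReal) : ℕ → Set Ω
  | 0 => {ω | Z ω ≤ S ∨ Z ω = ⊤}
  | n + 1 => {ω | R n < Z ω ∧ Z ω ≤ R (n + 1)}

theorem fernique_aux {Ω : Type*} [MeasurableSpace Ω] (P : Measure Ω) [IsProbabilityMeasure P]
    (Z : Ω → ENNReal) (hZ : Measurable Z) (c c₁ : ℝ) (hc : 1 ≤ c) (hc₁ : 1 < c₁)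
    (s : ℕ) (hs1 : 1 ≤ s) (hq : (1 : ENNReal) / 2 < P {ω | Z ω ≤ (s : ENNReal)})
    (key : ∀ r : ENNReal, r ≠ ⊤ →
      P {ω | Z ω ≤ (s : ENNReal)} *
        P {ω | ENNReal.ofReal c * (ENNReal.ofReal c₁ * r + (s : ENNReal)) < Z ω}
        ≤ P {ω | r < Z ω} * P {ω | r < Z ω}) :
    ∃ α β : ℝ, 0 < α ∧ 0 < β ∧
      ∫⁻ ω, ENNReal.ofReal (Real.exp (α * (Z ω).toReal ^ β)) ∂P < ⊤ := by
  -- basic constants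
  set S : ENNReal := (s : ENNReal) with hSd
  have hSt : S ≠ ⊤ := ENNReal.natCast_ne_top s
  have hS1 : (1 : ENNReal) ≤ S := by rw [hSd]; exact_mod_cast hs1
  have h21 : (2 : ENNReal) * (1 / 2) = 1 := by
    rw [one_div]; exact ENNReal.mul_inv_cancel two_ne_zero (by norm_num)
  set C : ENNReal := ENNReal.ofReal c with hCd
  set C₁ : ENNReal := ENNReal.ofReal c₁ with hC₁d
  have hC1 : 1 ≤ C := ENNReal.one_le_ofReal.mpr hc
  have hC0 : C ≠ 0 := (lt_of_lt_of_le one_pos hC1).ne'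
  have hCt : C ≠ ⊤ := ENNReal.ofReal_ne_top
  have hC₁1 : 1 < C₁ := ENNReal.one_lt_ofReal.mpr hc₁
  have hC₁0 : C₁ ≠ 0 := (lt_trans one_pos hC₁1).ne'
  have hC₁t : C₁ ≠ ⊤ := ENNReal.ofReal_ne_top
  set kR : ℝ := c * (c₁ + 1) with hkRd
  have hkR1 : 1 < kR := by nlinarith
  have hkR0 : 0 < kR := by linarith
  set K : ENNReal := ENNReal.ofReal kR with hKd
  have hKt : K ≠ ⊤ := ENNReal.ofReal_ne_top
  have hK : K = C * (C₁ + 1) := by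
    rw [hKd, hkRd, ENNReal.ofReal_mul (by linarith), ENNReal.ofReal_add (by linarith) zero_le_one,
      ENNReal.ofReal_one]
  have hK1 : 1 ≤ K := ENNReal.one_le_ofReal.mpr hkR1.le
  -- the recursive sequence
  set R : ℕ → ENNReal := ferniqueSeq C C₁ S with hRd
  have hR0 : R 0 = S := rfl
  have hRsucc : ∀ n, R (n + 1) = C * (C₁ * R n + S) := fun _ => rfl
  have hRt : ∀ n, R n ≠ ⊤ := by
    intro n
    induction n with
    | zero => exact hSt
    | succ n ih =>
      rw [hRsucc]
      exact ENNReal.mul_ne_top hCt (ENNReal.add_ne_top.mpr ⟨ENNReal.mul_ne_top hC₁t ih, hSt⟩)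
  have hRup : ∀ n, R n ≤ S * K ^ (n + 1) := by
    intro n
    induction n with
    | zero => simpa [hR0] using le_mul_of_one_le_right zero_le hK1
    | succ n ih =>
      rw [hRsucc]
      have hs' : S ≤ S * K ^ (n + 1) := le_mul_of_one_le_right zero_le (one_le_pow_of_one_le' hK1 _)
      have h1 : C₁ * R n + S ≤ (C₁ + 1) * (S * K ^ (n + 1)) := by
        calc C₁ * R n + S ≤ C₁ * (S * K ^ (n + 1)) + 1 * (S * K ^ (n + 1)) := by
              exact add_le_add (mul_le_mul_right ih _) (by simpa using hs')
          _ = (C₁ + 1) * (S * K ^ (n + 1)) := by ring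
      calc C * (C₁ * R n + S) ≤ C * ((C₁ + 1) * (S * K ^ (n + 1))) := mul_le_mul_right h1 _
        _ = S * K ^ (n + 1 + 1) := by rw [hK]; ring
  have hRlow : ∀ n, C₁ ^ n ≤ R n := by
    intro n
    induction n with
    | zero => simpa [hR0] using hS1
    | succ n ih =>
      rw [hRsucc]
      calc C₁ ^ (n + 1) = C₁ * C₁ ^ n := by ring
        _ ≤ C₁ * R n := mul_le_mul_right ih _
        _ ≤ C₁ * R n + S := le_self_add
        _ ≤ C * (C₁ * R n + S) := le_mul_of_one_le_left zero_le hC1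
  -- tail probabilities
  set q : ENNReal := P {ω | Z ω ≤ S} with hqd
  have hps : P {ω | S < Z ω} < 1 / 2 := by
    have hcompl : {ω | Z ω ≤ S}ᶜ = {ω | S < Z ω} := by ext ω; simp [not_le]
    have hms : MeasurableSet {ω | Z ω ≤ S} := hZ measurableSet_Iic
    have h1 : P {ω | S < Z ω} = 1 - q := by
      rw [← hcompl, prob_compl_eq_one_sub hms]
    have h2 : (1 : ENNReal) < 1 / 2 + q := by
      calc (1 : ENNReal) = 1 / 2 + 1 / 2 := (ENNReal.add_halves 1).symm
        _ < 1 / 2 + q := by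
          exact ENNReal.add_lt_add_left (by norm_num) hq
    rw [h1, ENNReal.sub_lt_iff_lt_right (measure_ne_top P _) prob_le_one]
    exact h2
  set d0 : ENNReal := 2 * P {ω | S < Z ω} with hd0d
  have hd01 : d0 < 1 := by
    have := (ENNReal.mul_lt_mul_iff_right (two_ne_zero) (by norm_num : (2:ENNReal) ≠ ⊤)).mpr hps
    calc d0 < 2 * (1 / 2) := this
      _ = 1 := h21
  have hrec : ∀ n, P {ω | R (n + 1) < Z ω} ≤ 2 * (P {ω | R n < Z ω} * P {ω | R n < Z ω}) := by
    intro n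
    have hk := key (R n) (hRt n)
    rw [← hRsucc n] at hk
    have h2q : (1 : ENNReal) ≤ 2 * q := by
      calc (1 : ENNReal) = 2 * (1 / 2) := h21.symm
        _ ≤ 2 * q := mul_le_mul_right hq.le _
    calc P {ω | R (n + 1) < Z ω} = 1 * P {ω | R (n + 1) < Z ω} := (one_mul _).symm
      _ ≤ (2 * q) * P {ω | R (n + 1) < Z ω} := mul_le_mul_left h2q _
      _ = 2 * (q * P {ω | R (n + 1) < Z ω}) := by ring
      _ ≤ 2 * (P {ω | R n < Z ω} * P {ω | R n < Z ω}) := mul_le_mul_right hk _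
  have hd : ∀ n, 2 * P {ω | R n < Z ω} ≤ d0 ^ (2 ^ n) := by
    intro n
    induction n with
    | zero => simp [hR0, hd0d]
    | succ n ih =>
      calc 2 * P {ω | R (n + 1) < Z ω} ≤ 2 * (2 * (P {ω | R n < Z ω} * P {ω | R n < Z ω})) :=
            mul_le_mul_right (hrec n) _
        _ = (2 * P {ω | R n < Z ω}) * (2 * P {ω | R n < Z ω}) := by ring
        _ ≤ d0 ^ (2 ^ n) * d0 ^ (2 ^ n) := mul_le_mul' ih ih
        _ = d0 ^ (2 ^ (n + 1)) := by rw [← pow_add]; congr 1; ring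
  set D : ENNReal := max d0 (1 / 2) with hDd
  have hD2 : 1 / 2 ≤ D := le_max_right _ _
  have hD1 : D < 1 := max_lt hd01 (by norm_num)
  have hDt : D ≠ ⊤ := (lt_trans hD1 (by norm_num)).ne
  have hD0 : D ≠ 0 := (lt_of_lt_of_le (by norm_num : (0:ENNReal) < 1/2) hD2).ne'
  set m : ℝ := D.toReal with hmd
  have hm0 : 0 < m := ENNReal.toReal_pos hD0 hDt
  have hm1 : m < 1 := by
    have := (ENNReal.toReal_lt_toReal hDt (by norm_num : (1:ENNReal) ≠ ⊤)).mpr hD1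
    simpa using this
  set lam : ℝ := -Real.log m with hlamd
  have hlam : 0 < lam := neg_pos.mpr (Real.log_neg hm0 hm1)
  have htail : ∀ n, P {ω | R n < Z ω} ≤ ENNReal.ofReal (Real.exp (-(lam * 2 ^ n))) := by
    intro n
    have h1 : P {ω | R n < Z ω} ≤ D ^ (2 ^ n) := by
      calc P {ω | R n < Z ω} ≤ 2 * P {ω | R n < Z ω} :=
            le_mul_of_one_le_left zero_le one_le_two
        _ ≤ d0 ^ (2 ^ n) := hd n
        _ ≤ D ^ (2 ^ n) := pow_le_pow_left' (le_max_left _ _) _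
    have h2 : D ^ (2 ^ n : ℕ) = ENNReal.ofReal (Real.exp (-(lam * 2 ^ n))) := by
      conv_lhs => rw [← ENNReal.ofReal_toReal hDt]
      rw [← ENNReal.ofReal_pow hm0.le]
      congr 1
      have h3 : Real.exp (-(lam * 2 ^ n)) = Real.exp (Real.log m) ^ (2 ^ n : ℕ) := by
        rw [← Real.exp_nat_mul]
        congr 1
        rw [hlamd]
        push_cast
        ring
      rw [h3, Real.exp_log hm0]
    rw [← h2]
    exact h1
  -- exponents
  set β : ℝ := Real.log 2 / Real.log kR with hβd
  have hlogk : 0 < Real.log kR := Real.log_pos hkR1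
  have hβ : 0 < β := div_pos (Real.log_pos one_lt_two) hlogk
  set sR : ℝ := (s : ℝ) with hsRd
  have hsR1 : 1 ≤ sR := by rw [hsRd]; exact_mod_cast hs1
  have hsR0 : 0 < sR := lt_of_lt_of_le one_pos hsR1
  have hsβ : 0 < sR ^ β := Real.rpow_pos_of_pos hsR0 β
  set α : ℝ := lam / (8 * sR ^ β) with hαd
  have hα : 0 < α := div_pos hlam (by positivity)
  have hkβ : kR ^ β = 2 := by
    rw [Real.rpow_def_of_pos hkR0, hβd, mul_div_cancel₀ _ hlogk.ne', Real.exp_log two_pos]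
  have hRtoReal : ∀ n, (R n).toReal ≤ sR * kR ^ (n + 1) := by
    intro n
    have hfin' : S * K ^ (n + 1) ≠ ⊤ := ENNReal.mul_ne_top hSt (ENNReal.pow_ne_top hKt)
    have h1 : (S * K ^ (n + 1)).toReal = sR * kR ^ (n + 1) := by
      rw [ENNReal.toReal_mul, ENNReal.toReal_pow, hKd, ENNReal.toReal_ofReal hkR0.le, hSd]
      simp [hsRd]
    calc (R n).toReal ≤ (S * K ^ (n + 1)).toReal := ENNReal.toReal_mono hfin' (hRup n)
      _ = sR * kR ^ (n + 1) := h1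
  have hheight : ∀ n : ℕ, α * ((R (n + 1)).toReal) ^ β ≤ lam / 2 * 2 ^ n := by
    intro n
    have h0 : (R (n + 1)).toReal ≤ sR * kR ^ (n + 2) := hRtoReal (n + 1)
    have h1 : ((R (n + 1)).toReal) ^ β ≤ (sR * kR ^ (n + 2)) ^ β :=
      Real.rpow_le_rpow ENNReal.toReal_nonneg h0 hβ.le
    have h2 : (sR * kR ^ (n + 2) : ℝ) ^ β = sR ^ β * 2 ^ (n + 2) := by
      rw [Real.mul_rpow hsR0.le (by positivity)]
      congr 1
      rw [← Real.rpow_natCast kR (n + 2), ← Real.rpow_mul hkR0.le, mul_comm,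
        Real.rpow_mul hkR0.le, hkβ, Real.rpow_natCast]
    calc α * ((R (n + 1)).toReal) ^ β ≤ α * (sR ^ β * 2 ^ (n + 2)) := by
          exact mul_le_mul_of_nonneg_left (h1.trans_eq h2) hα.le
      _ = lam / 2 * 2 ^ n := by
          rw [hαd]
          field_simp
          ring
  refine ⟨α, β, hα, hβ, ?_⟩
  -- the partition sets
  set A : ℕ → Set Ω := ferniqueSet Z R S with hAd
  have hA0 : A 0 = {ω | Z ω ≤ S ∨ Z ω = ⊤} := rfl
  have hAs : ∀ n, A (n + 1) = {ω | R n < Z ω ∧ Z ω ≤ R (n + 1)} := fun _ => rfl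
  have hAmeas : ∀ n, MeasurableSet (A n) := by
    intro n
    cases n with
    | zero =>
      rw [hA0, Set.setOf_or]
      exact (hZ measurableSet_Iic).union (hZ (measurableSet_singleton ⊤))
    | succ n =>
      rw [hAs, Set.setOf_and]
      exact (hZ measurableSet_Ioi).inter (hZ measurableSet_Iic)
  have hcover : (Set.univ : Set Ω) ⊆ ⋃ n, A n := by
    intro ω _
    by_cases htop : Z ω = ⊤
    · exact Set.mem_iUnion.mpr ⟨0, Or.inr htop⟩
    by_cases hle : Z ω ≤ S
    · exact Set.mem_iUnion.mpr ⟨0, Or.inl hle⟩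
    have hex : ∃ n, Z ω ≤ R n := by
      obtain ⟨n, hn⟩ := pow_unbounded_of_one_lt (Z ω).toReal hc₁
      refine ⟨n, ?_⟩
      calc Z ω = ENNReal.ofReal (Z ω).toReal := (ENNReal.ofReal_toReal htop).symm
        _ ≤ ENNReal.ofReal (c₁ ^ n) := ENNReal.ofReal_le_ofReal hn.le
        _ = C₁ ^ n := by rw [ENNReal.ofReal_pow (by linarith)]
        _ ≤ R n := hRlow n
    have h0 : Nat.find hex ≠ 0 := by
      intro h0
      have hsp := Nat.find_spec hex
      rw [h0, hR0] at hsp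
      exact hle hsp
    obtain ⟨k, hk⟩ := Nat.exists_eq_succ_of_ne_zero h0
    refine Set.mem_iUnion.mpr ⟨k + 1, ?_, ?_⟩
    · exact not_le.mp (Nat.find_min hex (by omega))
    · have hsp := Nat.find_spec hex
      rw [hk] at hsp
      exact hsp
  set M : ENNReal := ENNReal.ofReal (Real.exp (α * sR ^ β)) with hMd
  have hM1 : 1 ≤ M := by
    rw [hMd, ← ENNReal.ofReal_one]
    exact ENNReal.ofReal_le_ofReal (Real.one_le_exp (by positivity))
  set ρ : ℝ := Real.exp (-(lam / 2)) with hρd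
  have hρ0 : 0 < ρ := Real.exp_pos _
  have hρ1 : ρ < 1 := Real.exp_lt_one_iff.mpr (by linarith)
  have hbound : ∀ n, ∫⁻ ω in A n, ENNReal.ofReal (Real.exp (α * (Z ω).toReal ^ β)) ∂P
      ≤ M * ENNReal.ofReal ρ ^ n := by
    intro n
    cases n with
    | zero =>
      have hpt : ∀ ω ∈ A 0, ENNReal.ofReal (Real.exp (α * (Z ω).toReal ^ β)) ≤ M := by
        intro ω hω
        rcases hω with h | h
        · apply ENNReal.ofReal_le_ofReal
          apply Real.exp_le_exp.mpr
          apply mul_le_mul_of_nonneg_left _ hα.le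
          apply Real.rpow_le_rpow ENNReal.toReal_nonneg _ hβ.le
          calc (Z ω).toReal ≤ S.toReal := ENNReal.toReal_mono hSt h
            _ = sR := by simp [hSd, hsRd]
        · rw [h]
          simp only [ENNReal.toReal_top, Real.zero_rpow hβ.ne', mul_zero, Real.exp_zero,
            ENNReal.ofReal_one]
          exact hM1
      calc ∫⁻ ω in A 0, ENNReal.ofReal (Real.exp (α * (Z ω).toReal ^ β)) ∂P
          ≤ ∫⁻ _ in A 0, M ∂P := setLIntegral_mono measurable_const hpt
        _ = M * P (A 0) := setLIntegral_const _ _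
        _ ≤ M * 1 := mul_le_mul_right prob_le_one _
        _ = M * ENNReal.ofReal ρ ^ 0 := by simp
    | succ n =>
      have hpt : ∀ ω ∈ A (n + 1), ENNReal.ofReal (Real.exp (α * (Z ω).toReal ^ β))
          ≤ ENNReal.ofReal (Real.exp (lam / 2 * 2 ^ n)) := by
        intro ω hω
        apply ENNReal.ofReal_le_ofReal
        apply Real.exp_le_exp.mpr
        calc α * (Z ω).toReal ^ β ≤ α * ((R (n + 1)).toReal) ^ β := by
              apply mul_le_mul_of_nonneg_left _ hα.le
              exact Real.rpow_le_rpow ENNReal.toReal_nonneg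
                (ENNReal.toReal_mono (hRt _) hω.2) hβ.le
          _ ≤ lam / 2 * 2 ^ n := hheight n
      have hPA : P (A (n + 1)) ≤ ENNReal.ofReal (Real.exp (-(lam * 2 ^ n))) := by
        refine le_trans (measure_mono ?_) (htail n)
        intro ω hω
        exact hω.1
      calc ∫⁻ ω in A (n + 1), ENNReal.ofReal (Real.exp (α * (Z ω).toReal ^ β)) ∂P
          ≤ ∫⁻ _ in A (n + 1), ENNReal.ofReal (Real.exp (lam / 2 * 2 ^ n)) ∂P :=
            setLIntegral_mono measurable_const hpt
        _ = ENNReal.ofReal (Real.exp (lam / 2 * 2 ^ n)) * P (A (n + 1)) := setLIntegral_const _ _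
        _ ≤ ENNReal.ofReal (Real.exp (lam / 2 * 2 ^ n)) * ENNReal.ofReal (Real.exp (-(lam * 2 ^ n))) :=
            mul_le_mul_right hPA _
        _ = ENNReal.ofReal (Real.exp (lam / 2 * 2 ^ n) * Real.exp (-(lam * 2 ^ n))) :=
            (ENNReal.ofReal_mul (Real.exp_pos _).le).symm
        _ = ENNReal.ofReal (Real.exp (-(lam / 2 * 2 ^ n))) := by
            rw [← Real.exp_add]
            congr 1
            ring
        _ ≤ ENNReal.ofReal (ρ ^ (n + 1)) := by
            apply ENNReal.ofReal_le_ofReal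
            have h1 : ρ ^ (2 ^ n : ℕ) = Real.exp (-(lam / 2 * 2 ^ n)) := by
              rw [hρd, ← Real.exp_nat_mul]
              congr 1
              push_cast
              ring
            rw [← h1]
            exact pow_le_pow_of_le_one hρ0.le hρ1.le (Nat.succ_le_of_lt (Nat.lt_two_pow_self))
        _ = ENNReal.ofReal ρ ^ (n + 1) := ENNReal.ofReal_pow hρ0.le _
        _ ≤ M * ENNReal.ofReal ρ ^ (n + 1) := le_mul_of_one_le_left zero_le hM1
  have hcover' : (⋃ n, A n) = Set.univ := Set.eq_univ_of_univ_subset hcover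
  calc ∫⁻ ω, ENNReal.ofReal (Real.exp (α * (Z ω).toReal ^ β)) ∂P
      = ∫⁻ ω in ⋃ n, A n, ENNReal.ofReal (Real.exp (α * (Z ω).toReal ^ β)) ∂P := by
        rw [hcover', Measure.restrict_univ]
    _ ≤ ∑' n, ∫⁻ ω in A n, ENNReal.ofReal (Real.exp (α * (Z ω).toReal ^ β)) ∂P :=
        lintegral_iUnion_le _ _
    _ ≤ ∑' n, M * ENNReal.ofReal ρ ^ n := ENNReal.tsum_le_tsum hbound
    _ = M * ∑' n, ENNReal.ofReal ρ ^ n := ENNReal.tsum_mul_left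
    _ = M * (1 - ENNReal.ofReal ρ)⁻¹ := by rw [ENNReal.tsum_geometric]
    _ < ⊤ := ENNReal.mul_lt_top ENNReal.ofReal_lt_top
        (ENNReal.inv_lt_top.mpr (tsub_pos_of_lt (ENNReal.ofReal_lt_one.mpr hρ1)))

/-- Fernique's theorem, general version: let `V` be a separable topological vector space
and `φ : V → [0,∞]` Borel measurable with `φ(−x) = φ(x)`,
`c₂ φ(x) ≤ φ(√2 x) ≤ c₁ φ(x)` and `φ(x+y) ≤ c(φ(x) + φ(y))` for constants `c ≥ 1`,
`c₁, c₂ > 1`. If `X` is a `V`-valued random variable such that for an independent copy `Y`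
of `X` the pair `(φ(X), φ(Y))` has the same law as `(φ((X−Y)/√2), φ((X+Y)/√2))`, and
`φ(X) < ∞` a.s., then `E[exp(α φ(X)^β)] < ∞` for some `α, β > 0`. -/
theorem stmt10 {V : Type*} [AddCommGroup V] [Module ℝ V] [TopologicalSpace V]
    [IsTopologicalAddGroup V] [ContinuousSMul ℝ V] [TopologicalSpace.SeparableSpace V]
    [MeasurableSpace V] [BorelSpace V]
    (φ : V → ENNReal) (hφ : Measurable φ)
    (c c₁ c₂ : ℝ) (hc : 1 ≤ c) (hc₁ : 1 < c₁) (hc₂ : 1 < c₂)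
    (hsymm : ∀ x : V, φ (-x) = φ x)
    (hlow : ∀ x : V, ENNReal.ofReal c₂ * φ x ≤ φ ((Real.sqrt 2) • x))
    (hup : ∀ x : V, φ ((Real.sqrt 2) • x) ≤ ENNReal.ofReal c₁ * φ x)
    (htri : ∀ x y : V, φ (x + y) ≤ ENNReal.ofReal c * (φ x + φ y))
    {Ω : Type*} [MeasurableSpace Ω] (P : Measure Ω) [IsProbabilityMeasure P]
    (X Y : Ω → V) (hX : Measurable X) (hY : Measurable Y)
    (hXY : IndepFun X Y P) (hcopy : P.map Y = P.map X)
    (hrot : P.map (fun ω => (φ (X ω), φ (Y ω)))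
      = P.map (fun ω => (φ ((Real.sqrt 2)⁻¹ • (X ω - Y ω)),
                          φ ((Real.sqrt 2)⁻¹ • (X ω + Y ω)))))
    (hfin : ∀ᵐ ω ∂P, φ (X ω) < ⊤) :
    ∃ α β : ℝ, 0 < α ∧ 0 < β ∧
      ∫⁻ ω, ENNReal.ofReal (Real.exp (α * (φ (X ω)).toReal ^ β)) ∂P < ⊤ := by
  have hZm : Measurable fun ω => φ (X ω) := hφ.comp hX
  have hφY : Measurable fun ω => φ (Y ω) := hφ.comp hY
  -- Step 1: choose a level s (a natural number ≥ 1) with P(φ(X) ≤ s) > 1/2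
  have hE : ∀ n : ℕ, MeasurableSet {ω | φ (X ω) ≤ (n : ENNReal)} :=
    fun _ => hZm measurableSet_Iic
  have hmono : Monotone fun n : ℕ => {ω | φ (X ω) ≤ (n : ENNReal)} := by
    intro a b hab ω h
    simp only [Set.mem_setOf_eq] at h ⊢
    exact le_trans h (Nat.cast_le.mpr hab)
  have hunion : P (⋃ n : ℕ, {ω | φ (X ω) ≤ (n : ENNReal)}) = 1 := by
    rw [← prob_compl_eq_zero_iff (MeasurableSet.iUnion hE)]
    refine measure_mono_null ?_ (ae_iff.mp hfin)
    intro ω hω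
    simp only [Set.mem_compl_iff, Set.mem_iUnion, not_exists, Set.mem_setOf_eq] at hω ⊢
    intro hlt
    obtain ⟨n, hn⟩ := ENNReal.exists_nat_gt hlt.ne
    exact hω n hn.le
  have htend := tendsto_measure_iUnion_atTop (μ := P) hmono
  rw [hunion] at htend
  have hev := (htend.eventually_const_lt (by norm_num : (1 : ENNReal) / 2 < 1)).and
    (Filter.eventually_ge_atTop 1)
  obtain ⟨s, hs⟩ := hev.exists
  have hq : (1 : ENNReal) / 2 < P {ω | φ (X ω) ≤ (s : ENNReal)} := hs.1
  have hs1 : 1 ≤ s := hs.2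
  -- Step 2: apply the auxiliary lemma
  refine fernique_aux P (fun ω => φ (X ω)) hZm c c₁ hc hc₁ s hs1 hq ?_
  intro r hrt
  set S : ENNReal := (s : ENNReal) with hSd
  have hSt : S ≠ ⊤ := ENNReal.natCast_ne_top s
  set C : ENNReal := ENNReal.ofReal c with hCd
  set C₁ : ENNReal := ENNReal.ofReal c₁ with hC₁d
  have hC0 : C ≠ 0 := (ENNReal.ofReal_pos.mpr (by linarith)).ne'
  have hCt : C ≠ ⊤ := ENNReal.ofReal_ne_top
  have hC₁0 : C₁ ≠ 0 := (ENNReal.ofReal_pos.mpr (by linarith)).ne'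
  have hC₁t : C₁ ≠ ⊤ := ENNReal.ofReal_ne_top
  set t : ENNReal := C * (C₁ * r + S) with htd
  -- tail equality for Y
  have hYtail : ∀ u : ENNReal, P {ω | u < φ (Y ω)} = P {ω | u < φ (X ω)} := by
    intro u
    have h1 : {ω | u < φ (Y ω)} = Y ⁻¹' (φ ⁻¹' Set.Ioi u) := rfl
    have h2 : {ω | u < φ (X ω)} = X ⁻¹' (φ ⁻¹' Set.Ioi u) := rfl
    rw [h1, h2, ← Measure.map_apply hY (hφ measurableSet_Ioi), hcopy,
      Measure.map_apply hX (hφ measurableSet_Ioi)]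
  have hind : IndepFun (fun ω => φ (X ω)) (fun ω => φ (Y ω)) P := hXY.comp hφ hφ
  -- independence product formulas
  have hprod1 : P ({ω | φ (X ω) ≤ S} ∩ {ω | t < φ (Y ω)})
      = P {ω | φ (X ω) ≤ S} * P {ω | t < φ (X ω)} := by
    have h := hind.measure_inter_preimage_eq_mul (Set.Iic S) (Set.Ioi t)
      measurableSet_Iic measurableSet_Ioi
    have h1 : (fun ω => φ (X ω)) ⁻¹' Set.Iic S = {ω | φ (X ω) ≤ S} := rfl
    have h2 : (fun ω => φ (Y ω)) ⁻¹' Set.Ioi t = {ω | t < φ (Y ω)} := rfl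
    rw [h1, h2] at h
    rw [h, hYtail t]
  have hprod2 : P ({ω | r < φ (X ω)} ∩ {ω | r < φ (Y ω)})
      = P {ω | r < φ (X ω)} * P {ω | r < φ (X ω)} := by
    have h := hind.measure_inter_preimage_eq_mul (Set.Ioi r) (Set.Ioi r)
      measurableSet_Ioi measurableSet_Ioi
    have h1 : (fun ω => φ (X ω)) ⁻¹' Set.Ioi r = {ω | r < φ (X ω)} := rfl
    have h2 : (fun ω => φ (Y ω)) ⁻¹' Set.Ioi r = {ω | r < φ (Y ω)} := rfl
    rw [h1, h2] at h
    rw [h, hYtail r]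
  -- rotation invariance transfer
  have hfm : Measurable fun ω => (φ (X ω), φ (Y ω)) := (hφ.comp hX).prodMk (hφ.comp hY)
  have hgae : AEMeasurable (fun ω => (φ ((Real.sqrt 2)⁻¹ • (X ω - Y ω)),
      φ ((Real.sqrt 2)⁻¹ • (X ω + Y ω)))) P := by
    by_contra h
    rw [Measure.map_of_not_aemeasurable h] at hrot
    have h1 : (P.map (fun ω => (φ (X ω), φ (Y ω)))) Set.univ = 0 := by
      rw [hrot]; simp
    rw [Measure.map_apply hfm MeasurableSet.univ] at h1
    simp at h1
  have hTm : MeasurableSet (Set.Iic S ×ˢ Set.Ioi t) := measurableSet_Iic.prod measurableSet_Ioi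
  have hrot' : P ({ω | φ (X ω) ≤ S} ∩ {ω | t < φ (Y ω)})
      = P ({ω | φ ((Real.sqrt 2)⁻¹ • (X ω - Y ω)) ≤ S}
          ∩ {ω | t < φ ((Real.sqrt 2)⁻¹ • (X ω + Y ω))}) := by
    have h1 : {ω | φ (X ω) ≤ S} ∩ {ω | t < φ (Y ω)}
        = (fun ω => (φ (X ω), φ (Y ω))) ⁻¹' (Set.Iic S ×ˢ Set.Ioi t) := by
      ext ω
      simp [Set.mem_prod]
    have h2 : {ω | φ ((Real.sqrt 2)⁻¹ • (X ω - Y ω)) ≤ S}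
          ∩ {ω | t < φ ((Real.sqrt 2)⁻¹ • (X ω + Y ω))}
        = (fun ω => (φ ((Real.sqrt 2)⁻¹ • (X ω - Y ω)),
            φ ((Real.sqrt 2)⁻¹ • (X ω + Y ω)))) ⁻¹' (Set.Iic S ×ˢ Set.Ioi t) := by
      ext ω
      simp [Set.mem_prod]
    rw [h1, h2, ← Measure.map_apply hfm hTm, hrot,
      Measure.map_apply_of_aemeasurable hgae hTm]
  -- the pointwise inclusion
  have hincl : {ω | φ ((Real.sqrt 2)⁻¹ • (X ω - Y ω)) ≤ S}
        ∩ {ω | t < φ ((Real.sqrt 2)⁻¹ • (X ω + Y ω))}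
      ⊆ {ω | r < φ (X ω)} ∩ {ω | r < φ (Y ω)} := by
    rintro ω ⟨h1, h2⟩
    simp only [Set.mem_setOf_eq] at h1 h2 ⊢
    set x : V := X ω with hx
    set y : V := Y ω with hy
    have hsq0 : (0 : ℝ) < Real.sqrt 2 := Real.sqrt_pos.mpr (by norm_num)
    have hss : Real.sqrt 2 * Real.sqrt 2 = 2 := Real.mul_self_sqrt (by norm_num)
    have hsum : (Real.sqrt 2)⁻¹ • (x + y) + (Real.sqrt 2)⁻¹ • (x - y) = Real.sqrt 2 • x := by
      rw [← smul_add]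
      have hxy : (x + y) + (x - y) = (2 : ℝ) • x := by
        rw [two_smul]; abel
      rw [hxy, smul_smul]
      congr 1
      field_simp
      rw [sq, hss]
    have hdiff : (Real.sqrt 2)⁻¹ • (x + y) - (Real.sqrt 2)⁻¹ • (x - y) = Real.sqrt 2 • y := by
      rw [← smul_sub]
      have hxy : (x + y) - (x - y) = (2 : ℝ) • y := by
        rw [two_smul]; abel
      rw [hxy, smul_smul]
      congr 1
      field_simp
      rw [sq, hss]
    have hb1 : φ ((Real.sqrt 2)⁻¹ • (x + y)) ≤ C * (C₁ * φ x + φ ((Real.sqrt 2)⁻¹ • (x - y))) := by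
      have hw1 : (Real.sqrt 2)⁻¹ • (x + y)
          = Real.sqrt 2 • x + -((Real.sqrt 2)⁻¹ • (x - y)) := by
        rw [← hsum]; abel
      rw [hw1]
      refine le_trans (htri _ _) ?_
      rw [hsymm]
      exact mul_le_mul_right (add_le_add (hup x) le_rfl) C
    have hb2 : φ ((Real.sqrt 2)⁻¹ • (x + y)) ≤ C * (C₁ * φ y + φ ((Real.sqrt 2)⁻¹ • (x - y))) := by
      have hw2 : (Real.sqrt 2)⁻¹ • (x + y)
          = Real.sqrt 2 • y + (Real.sqrt 2)⁻¹ • (x - y) := by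
        rw [← hdiff]; abel
      rw [hw2]
      refine le_trans (htri _ _) ?_
      exact mul_le_mul_right (add_le_add (hup y) le_rfl) C
    constructor
    · have h3 : C * (C₁ * r + S) < C * (C₁ * φ x + S) := by
        refine lt_of_lt_of_le h2 (le_trans hb1 ?_)
        exact mul_le_mul_right (add_le_add le_rfl h1) C
      have h4 := (ENNReal.mul_lt_mul_iff_right hC0 hCt).mp h3
      have h5 := (ENNReal.add_lt_add_iff_right hSt).mp h4
      exact (ENNReal.mul_lt_mul_iff_right hC₁0 hC₁t).mp h5
    · have h3 : C * (C₁ * r + S) < C * (C₁ * φ y + S) := by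
        refine lt_of_lt_of_le h2 (le_trans hb2 ?_)
        exact mul_le_mul_right (add_le_add le_rfl h1) C
      have h4 := (ENNReal.mul_lt_mul_iff_right hC0 hCt).mp h3
      have h5 := (ENNReal.add_lt_add_iff_right hSt).mp h4
      exact (ENNReal.mul_lt_mul_iff_right hC₁0 hC₁t).mp h5
  -- assemble
  calc P {ω | φ (X ω) ≤ S} * P {ω | t < φ (X ω)}
      = P ({ω | φ (X ω) ≤ S} ∩ {ω | t < φ (Y ω)}) := hprod1.symm
    _ = P ({ω | φ ((Real.sqrt 2)⁻¹ • (X ω - Y ω)) ≤ S}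
          ∩ {ω | t < φ ((Real.sqrt 2)⁻¹ • (X ω + Y ω))}) := hrot'
    _ ≤ P ({ω | r < φ (X ω)} ∩ {ω | r < φ (Y ω)}) := measure_mono hincl
    _ = P {ω | r < φ (X ω)} * P {ω | r < φ (X ω)} := hprod2
end

section
/- Let 0 < p < ∞, α > -1, and let c_k ≥ 0 with Σ c_k r^k having radius of convergence at least 1. Then ∫₀^1 (Σ_{k=0}^∞ c_k r^k)^p (1−r)^α dr < ∞ if and only if Σ_{n=0}^∞ 2^{-n(α+1)} (Σ_{k=2^n}^{2^{n+1}−1} c_k)^p < ∞. -/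
open MeasureTheory Real Filter
open scoped ENNReal NNReal

/-- Ratio-test summability of `b^j * exp(-(s * 2^j))`. -/
lemma MP_aux_ratio (b s : ℝ) (hb : 0 ≤ b) (hs : 0 < s) :
    Summable (fun j : ℕ => b ^ j * Real.exp (-(s * 2 ^ j))) := by
  apply summable_of_ratio_norm_eventually_le (r := 1/2) (by norm_num)
  have h2 : Tendsto (fun j : ℕ => b * Real.exp (-(s * 2 ^ j))) atTop (nhds 0) := by
    have h3 : Tendsto (fun j : ℕ => (2:ℝ) ^ j) atTop atTop :=
      tendsto_pow_atTop_atTop_of_one_lt (by norm_num)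
    have h4 : Tendsto (fun j : ℕ => -(s * 2 ^ j)) atTop atBot :=
      tendsto_neg_atTop_atBot.comp (h3.const_mul_atTop hs)
    have := (Real.tendsto_exp_atBot.comp h4).const_mul b
    simpa using this
  filter_upwards [h2.eventually_le_const (by norm_num : (0:ℝ) < 1/2)] with j hj
  have hterm : ∀ k : ℕ, 0 ≤ b ^ k * Real.exp (-(s * 2 ^ k)) := fun k =>
    mul_nonneg (pow_nonneg hb k) (Real.exp_nonneg _)
  rw [Real.norm_of_nonneg (hterm _), Real.norm_of_nonneg (hterm _)]
  have : b ^ (j+1) * Real.exp (-(s * 2 ^ (j+1)))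
      = (b * Real.exp (-(s * 2 ^ j))) * (b ^ j * Real.exp (-(s * 2 ^ j))) := by
    rw [pow_succ, pow_succ]
    rw [show -(s * (2^j*2)) = -(s * 2^j) + -(s * 2^j) by ring, Real.exp_add]
    ring
  rw [this]
  exact mul_le_mul_of_nonneg_right hj (hterm j)

/-- `(1 - 2⁻¹^j)^(2^j) ≥ 1/4` for `j ≥ 1`. -/
lemma MP_aux_quarter : ∀ j : ℕ, 1 ≤ j → (1/4 : ℝ) ≤ (1 - (2:ℝ)⁻¹ ^ j) ^ (2 ^ j) := by
  intro j hj
  induction j with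
  | zero => omega
  | succ n ih =>
    rcases Nat.eq_or_lt_of_le hj with h | h
    · rw [← h]; norm_num
    · have hn : 1 ≤ n := by omega
      have h1 : (1 - (2:ℝ)⁻¹ ^ n) ≤ (1 - (2:ℝ)⁻¹ ^ (n+1)) ^ 2 := by
        have : (0:ℝ) ≤ ((2:ℝ)⁻¹ ^ (n+1)) := by positivity
        have h2 : ((2:ℝ)⁻¹ ^ (n+1)) = (2:ℝ)⁻¹ ^ n * 2⁻¹ := by ring
        nlinarith [pow_nonneg (by norm_num : (0:ℝ) ≤ 2⁻¹) n]
      have h0 : (0:ℝ) ≤ 1 - (2:ℝ)⁻¹ ^ n := by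
        have : (2:ℝ)⁻¹ ^ n ≤ 1 := pow_le_one₀ (by norm_num) (by norm_num)
        linarith
      calc (1/4 : ℝ) ≤ (1 - (2:ℝ)⁻¹ ^ n) ^ (2 ^ n) := ih hn
        _ ≤ ((1 - (2:ℝ)⁻¹ ^ (n+1)) ^ 2) ^ (2 ^ n) := pow_le_pow_left₀ h0 h1 _
        _ = (1 - (2:ℝ)⁻¹ ^ (n+1)) ^ (2 ^ (n+1)) := by
            rw [← pow_mul]; ring_nf

/-- `(1 - 2⁻¹^n)^N ≤ exp(-(2⁻¹^n * N))`. -/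
lemma MP_aux_exp (n N : ℕ) : (1 - (2:ℝ)⁻¹ ^ n) ^ N ≤ Real.exp (-((2:ℝ)⁻¹ ^ n * N)) := by
  have ht : (2:ℝ)⁻¹ ^ n ≤ 1 := pow_le_one₀ (by norm_num) (by norm_num)
  have h0 : (0:ℝ) ≤ 1 - (2:ℝ)⁻¹ ^ n := by linarith
  have h1 : (1 - (2:ℝ)⁻¹ ^ n) ≤ Real.exp (-((2:ℝ)⁻¹ ^ n)) := by
    have := Real.add_one_le_exp (-((2:ℝ)⁻¹ ^ n))
    linarith
  calc (1 - (2:ℝ)⁻¹ ^ n) ^ N ≤ (Real.exp (-((2:ℝ)⁻¹ ^ n))) ^ N := pow_le_pow_left₀ h0 h1 N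
    _ = Real.exp (-((2:ℝ)⁻¹ ^ n * N)) := by
        rw [← Real.exp_nat_mul]; ring_nf

/-- rpow window bounds for `x ∈ [1/2, 1]`. -/
lemma MP_aux_window_hi (α x : ℝ) (h1 : (2:ℝ)⁻¹ ≤ x) (h2 : x ≤ 1) : x ^ α ≤ (2:ℝ) ^ |α| := by
  have hx0 : (0:ℝ) < x := lt_of_lt_of_le (by norm_num) h1
  rcases le_or_gt 0 α with hα | hα
  · rw [abs_of_nonneg hα]
    calc x ^ α ≤ 1 ^ α := Real.rpow_le_rpow hx0.le h2 hα
      _ = 1 := Real.one_rpow α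
      _ ≤ (2:ℝ) ^ α := Real.one_le_rpow (by norm_num) hα
  · rw [abs_of_neg hα]
    calc x ^ α ≤ ((2:ℝ)⁻¹) ^ α := Real.rpow_le_rpow_of_nonpos (by norm_num) h1 hα.le
      _ = (2:ℝ) ^ (-α) := by
          rw [← Real.rpow_neg_one (2:ℝ), ← Real.rpow_mul (by norm_num)]; ring_nf

lemma MP_aux_window_lo (α x : ℝ) (h1 : (2:ℝ)⁻¹ ≤ x) (h2 : x ≤ 1) : (2:ℝ) ^ (-|α|) ≤ x ^ α := by
  have hx0 : (0:ℝ) < x := lt_of_lt_of_le (by norm_num) h1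
  rcases le_or_gt 0 α with hα | hα
  · rw [abs_of_nonneg hα]
    calc (2:ℝ) ^ (-α) = ((2:ℝ)⁻¹) ^ α := by
          rw [← Real.rpow_neg_one (2:ℝ), ← Real.rpow_mul (by norm_num)]; ring_nf
      _ ≤ x ^ α := Real.rpow_le_rpow (by norm_num) h1 hα
  · rw [abs_of_neg hα, neg_neg]
    calc (2:ℝ) ^ α ≤ 1 ^ α := Real.rpow_le_rpow_of_nonpos (by norm_num) (by norm_num) hα.le
      _ = 1 := Real.one_rpow α
      _ ≤ x ^ α := Real.one_le_rpow_of_pos_of_le_one_of_nonpos hx0 h2 hα.le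

lemma MP_pow_rpow_comm (x : ℝ≥0∞) (k : ℕ) (y : ℝ) : (x ^ k) ^ y = (x ^ y) ^ k := by
  rw [← ENNReal.rpow_natCast x k, ← ENNReal.rpow_mul, mul_comm, ENNReal.rpow_mul,
    ENNReal.rpow_natCast]

lemma MP_real_pow_rpow_comm (x : ℝ) (hx : 0 ≤ x) (k : ℕ) (y : ℝ) :
    (x ^ k) ^ y = (x ^ y) ^ k := by
  rw [← Real.rpow_natCast x k, ← Real.rpow_mul hx, mul_comm, Real.rpow_mul hx,
    Real.rpow_natCast]

/-- Subadditivity of `rpow` for `p ≤ 1` over tsums in `ℝ≥0∞`. -/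
lemma MP_tsum_rpow_le (f : ℕ → ℝ≥0∞) {p : ℝ} (h0 : 0 < p) (h1 : p ≤ 1) :
    (∑' n, f n) ^ p ≤ ∑' n, f n ^ p := by
  have hfin : ∀ s : Finset ℕ, (∑ n ∈ s, f n) ^ p ≤ ∑ n ∈ s, f n ^ p := by
    intro s
    induction s using Finset.induction with
    | empty =>
      simp only [Finset.sum_empty]
      rw [ENNReal.zero_rpow_of_pos h0]
    | insert _ _ hx ih =>
      rw [Finset.sum_insert hx, Finset.sum_insert hx]
      calc _ ≤ _ ^ p + (∑ n ∈ _, f n) ^ p := ENNReal.rpow_add_le_add_rpow _ _ h0.le h1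
        _ ≤ _ := by exact add_le_add_right ih _
  have h0' : (0:ℝ) ≤ p := h0.le
  have htt : Filter.Tendsto (fun k => (∑ n ∈ Finset.range k, f n) ^ p) Filter.atTop
      (nhds ((∑' n, f n) ^ p)) :=
    (ENNReal.continuous_rpow_const.tendsto _).comp (ENNReal.tendsto_nat_tsum f)
  refine le_of_tendsto htt (Filter.Eventually.of_forall fun k => ?_)
  exact le_trans (hfin _) (ENNReal.sum_le_tsum _)

/-- Decomposition of a tsum over `ℕ` into the `0` term plus dyadic block sums. -/
lemma MP_block_tsum (g : ℕ → ℝ≥0∞) :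
    ∑' k, g k = g 0 + ∑' m, ∑ k ∈ Finset.Ico (2 ^ m) (2 ^ (m + 1)), g k := by
  have key : ∀ M : ℕ, ∑ k ∈ Finset.range (2 ^ M), g k
      = g 0 + ∑ m ∈ Finset.range M, ∑ k ∈ Finset.Ico (2 ^ m) (2 ^ (m + 1)), g k := by
    intro M
    induction M with
    | zero => simp
    | succ M ih =>
      rw [Finset.sum_range_succ, ← add_assoc, ← ih, Finset.range_eq_Ico, Finset.range_eq_Ico,
        Finset.sum_Ico_consecutive g (Nat.zero_le (2 ^ M)) (Nat.pow_le_pow_right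
          (by norm_num) (Nat.le_succ M : M ≤ M + 1))]
  have h1 : Filter.Tendsto (fun M => ∑ k ∈ Finset.range (2 ^ M), g k) Filter.atTop
      (nhds (∑' k, g k)) := by
    refine (ENNReal.tendsto_nat_tsum g).comp ?_
    exact tendsto_pow_atTop_atTop_of_one_lt (by norm_num)
  have h2 : Filter.Tendsto (fun M => g 0 + ∑ m ∈ Finset.range M,
      ∑ k ∈ Finset.Ico (2 ^ m) (2 ^ (m + 1)), g k) Filter.atTop
      (nhds (g 0 + ∑' m, ∑ k ∈ Finset.Ico (2 ^ m) (2 ^ (m + 1)), g k)) :=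
    tendsto_const_nhds.add (ENNReal.tendsto_nat_tsum _)
  have := h1.congr (fun M => key M)
  exact tendsto_nhds_unique this h2

/-- Geometric tail bound. -/
lemma MP_tail_bound {u : ℝ≥0∞} (f : ℕ → ℝ≥0∞) (c : ℝ≥0∞)
    (hf : ∀ j, f j ≤ c * u ^ j) : ∑' j, f j ≤ c * (1 - u)⁻¹ := by
  calc ∑' j, f j ≤ ∑' j, c * u ^ j := ENNReal.tsum_le_tsum hf
    _ = c * ∑' j, u ^ j := ENNReal.tsum_mul_left
    _ = c * (1 - u)⁻¹ := by rw [ENNReal.tsum_geometric]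

/-- Head-sum bound: dyadic-exponential decay beats geometric growth. -/
lemma MP_head_bound {qr b s : ℝ} (hqr : 0 < qr) (hb : 0 ≤ b) (hs : 0 < s) :
    ∃ Db : ℝ≥0∞, Db ≠ ⊤ ∧ ∀ (m : ℕ) (f : ℕ → ℝ≥0∞),
      (∀ n, n < m → f n ≤ (ENNReal.ofReal qr) ^ n *
        ENNReal.ofReal (b ^ (m - n) * Real.exp (-(s * 2 ^ (m - n))))) →
      ∑ n ∈ Finset.range m, f n ≤ (ENNReal.ofReal qr) ^ m * Db := by
  classical
  set d : ℕ → ℝ := fun j => (qr⁻¹ * b) ^ j * Real.exp (-(s * 2 ^ j)) with hd_def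
  have hd : Summable d := MP_aux_ratio _ _ (mul_nonneg (inv_nonneg.2 hqr.le) hb) hs
  have hdnn : ∀ j, 0 ≤ d j := fun j =>
    mul_nonneg (pow_nonneg (mul_nonneg (inv_nonneg.2 hqr.le) hb) j) (Real.exp_nonneg _)
  refine ⟨ENNReal.ofReal (∑' j, d j), ENNReal.ofReal_ne_top, fun m f hf => ?_⟩
  have step1 : ∀ n, n < m → f n ≤ (ENNReal.ofReal qr) ^ m * ENNReal.ofReal (d (m - n)) := by
    intro n hn
    refine (hf n hn).trans (le_of_eq ?_)
    rw [← ENNReal.ofReal_pow hqr.le, ← ENNReal.ofReal_pow hqr.le,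
      ← ENNReal.ofReal_mul (pow_nonneg hqr.le n), ← ENNReal.ofReal_mul (pow_nonneg hqr.le m)]
    congr 1
    have hm : m = n + (m - n) := by omega
    have hne : qr ^ (m - n) ≠ 0 := pow_ne_zero _ hqr.ne'
    rw [hd_def]
    simp only []
    rw [mul_pow, inv_pow]
    rw [show qr ^ m = qr ^ n * qr ^ (m - n) by rw [← pow_add, ← hm]]
    field_simp
  calc ∑ n ∈ Finset.range m, f n
      ≤ ∑ n ∈ Finset.range m, (ENNReal.ofReal qr) ^ m * ENNReal.ofReal (d (m - n)) :=
        Finset.sum_le_sum (fun n hn => step1 n (Finset.mem_range.1 hn))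
    _ = (ENNReal.ofReal qr) ^ m * ∑ n ∈ Finset.range m, ENNReal.ofReal (d (m - n)) := by
        rw [← Finset.mul_sum]
    _ ≤ (ENNReal.ofReal qr) ^ m * ENNReal.ofReal (∑' j, d j) := by
        refine mul_le_mul_right ?_ _
        have hrefl : ∑ n ∈ Finset.range m, ENNReal.ofReal (d (m - n))
            = ∑ n ∈ Finset.range m, ENNReal.ofReal (d (n + 1)) := by
          rw [← Finset.sum_range_reflect (fun j => ENNReal.ofReal (d (j + 1))) m]
          refine Finset.sum_congr rfl fun n hn => ?_
          have : m - n = m - 1 - n + 1 := by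
            have := Finset.mem_range.1 hn; omega
          rw [this]
        rw [hrefl, ENNReal.ofReal_tsum_of_nonneg hdnn hd]
        calc ∑ n ∈ Finset.range m, ENNReal.ofReal (d (n + 1))
            ≤ ∑' n, ENNReal.ofReal (d (n + 1)) := ENNReal.sum_le_tsum _
          _ ≤ ∑' n, ENNReal.ofReal (d n) := by
              have hh := Summable.sum_add_tsum_nat_add' (M := ℝ≥0∞) (f := fun n => ENNReal.ofReal (d n))
                (k := 1) ENNReal.summable
              rw [← hh]
              exact le_add_self


lemma MP_add_rpow (a b : ℝ≥0∞) {p : ℝ} (hp : 0 ≤ p) : (a + b) ^ p ≤ 2^p * (a^p + b^p) := by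
  have h1 : a + b ≤ 2 * max a b := by
    rw [two_mul]
    exact add_le_add (le_max_left a b) (le_max_right a b)
  calc (a+b)^p ≤ (2 * max a b)^p := ENNReal.rpow_le_rpow h1 hp
    _ = 2^p * (max a b)^p := ENNReal.mul_rpow_of_nonneg _ _ hp
    _ ≤ 2^p * (a^p + b^p) := by
        refine mul_le_mul_right ?_ _
        rcases max_cases a b with ⟨h, _⟩ | ⟨h, _⟩ <;> rw [h]
        · exact le_self_add
        · exact le_add_self

lemma MP_geom_abs (Q : ℝ≥0∞) (n : ℕ) : ∑' m, Q ^ ((m - n) + (n - m)) ≤ 2 * (1 - Q)⁻¹ := by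
  have hsplit := Summable.sum_add_tsum_nat_add' (M := ℝ≥0∞)
    (f := fun m => Q ^ ((m - n) + (n - m))) (k := n) ENNReal.summable
  rw [← hsplit, two_mul]
  refine add_le_add ?_ ?_
  · have hhead : ∑ m ∈ Finset.range n, Q ^ ((m - n) + (n - m))
        = ∑ m ∈ Finset.range n, Q ^ (m + 1) := by
      rw [← Finset.sum_range_reflect (fun m => Q ^ (m + 1)) n]
      refine Finset.sum_congr rfl fun m hm => ?_
      have := Finset.mem_range.1 hm
      congr 1
      omega
    rw [hhead]
    refine le_trans (ENNReal.sum_le_tsum _) ?_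
    have hh := Summable.sum_add_tsum_nat_add' (M := ℝ≥0∞) (f := fun m => Q ^ m) (k := 1)
      ENNReal.summable
    calc ∑' m, Q ^ (m + 1) ≤ ∑' m, Q ^ m := by rw [← hh]; exact le_add_self
      _ = (1 - Q)⁻¹ := ENNReal.tsum_geometric Q
  · have : ∀ j : ℕ, ((j + n) - n) + (n - (j + n)) = j := fun j => by omega
    simp_rw [this]
    rw [ENNReal.tsum_geometric Q]

/-- Theorem 1 of Mateljević–Pavlović: for `0 < p < ∞`, `α > −1`, and `c_k ≥ 0` whose power
series has radius of convergence at least 1,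
`∫₀¹ (Σ c_k r^k)^p (1−r)^α dr < ∞` iff
`Σ_n 2^{-n(α+1)} (Σ_{k=2ⁿ}^{2^{n+1}−1} c_k)^p < ∞`. -/
theorem stmt17 (p α : ℝ) (hp : 0 < p) (hα : -1 < α)
    (c : ℕ → ℝ) (hc : ∀ k, 0 ≤ c k)
    (hrad : ∀ r : ℝ, 0 ≤ r → r < 1 → Summable (fun k => c k * r ^ k)) :
    (∫⁻ r in Set.Ioo (0:ℝ) 1,
        ENNReal.ofReal ((∑' k : ℕ, c k * r ^ k) ^ p * (1 - r) ^ α) < ⊤)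
      ↔ (∑' n : ℕ, ENNReal.ofReal ((2 : ℝ) ^ (-(n : ℝ) * (α + 1)) *
          (∑ k ∈ Finset.Ico (2 ^ n) (2 ^ (n + 1)), c k) ^ p)) < ⊤ := by
  have hp' : (0:ℝ) ≤ p := hp.le
  have hα1 : (0:ℝ) < α + 1 := by linarith
  set qr : ℝ := (2:ℝ)⁻¹ ^ (α+1) with hqr_def
  have hqr0 : 0 < qr := Real.rpow_pos_of_pos (by norm_num) _
  have hqr1 : qr < 1 := Real.rpow_lt_one (by norm_num) (by norm_num) hα1
  set q : ℝ≥0∞ := ENNReal.ofReal qr with hq_def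
  have hq0 : q ≠ 0 := by
    simp [hq_def, ENNReal.ofReal_eq_zero, not_le, hqr0]
  have hqlt1 : q < 1 := by rw [hq_def]; exact ENNReal.ofReal_lt_one.2 hqr1
  have hqtop : q ≠ ⊤ := ENNReal.ofReal_ne_top
  have hgeo : ∑' n : ℕ, q ^ n = (1 - q)⁻¹ := ENNReal.tsum_geometric q
  have hgeo_top : (1 - q)⁻¹ ≠ ⊤ := by
    rw [Ne, ENNReal.inv_eq_top, tsub_eq_zero_iff_le]
    exact not_le.2 hqlt1
  set yr : ℝ := (2:ℝ)⁻¹ ^ α with hyr_def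
  have hyr0 : 0 < yr := Real.rpow_pos_of_pos (by norm_num) _
  have hyrq : qr = yr * 2⁻¹ := by
    rw [hqr_def, hyr_def, Real.rpow_add (by norm_num), Real.rpow_one]
  set xs : ℕ → ℝ := fun n => 1 - (2:ℝ)⁻¹ ^ n with hxs_def
  have hhalf : ∀ n : ℕ, (0:ℝ) < 2⁻¹ ^ n := fun n => by positivity
  have hhalf1 : ∀ n : ℕ, ((2:ℝ)⁻¹) ^ n ≤ 1 := fun n => pow_le_one₀ (by norm_num) (by norm_num)
  have hxs0 : ∀ n, 0 ≤ xs n := fun n => by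
    simp only [hxs_def]; linarith [hhalf1 n]
  have hxs1 : ∀ n, xs n < 1 := fun n => by
    simp only [hxs_def]; linarith [hhalf n]
  have hxsub : ∀ n, 1 - xs n = 2⁻¹ ^ n := fun n => by simp [hxs_def]
  have hxsmono : Monotone xs := by
    intro m n hmn
    simp only [hxs_def]
    have := pow_le_pow_of_le_one (by norm_num : (0:ℝ) ≤ 2⁻¹) (by norm_num) hmn
    linarith
  set Cf : ℕ → ℝ≥0∞ := fun k => ENNReal.ofReal (c k) with hCf_def
  set F : ℝ → ℝ≥0∞ := fun r => ∑' k, Cf k * (ENNReal.ofReal r) ^ k with hF_def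
  set T : ℕ → ℝ≥0∞ := fun n => ∑ k ∈ Finset.Ico (2^n) (2^(n+1)), Cf k with hT_def
  set G : ℕ → ℝ≥0∞ := fun n => F (xs n) with hG_def
  set S : ℝ≥0∞ := ∑' n, q^n * G n ^ p with hS_def
  set A : ℝ≥0∞ := ∑' n, q^n * T n ^ p with hA_def
  set Φ : ℝ → ℝ≥0∞ := fun r => F r ^ p * ENNReal.ofReal ((1-r)^α) with hΦ_def
  -- RHS rewrite
  have hq2 : ∀ n : ℕ, (2:ℝ) ^ (-(n:ℝ) * (α+1)) = qr ^ n := by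
    intro n
    rw [show -(n:ℝ) * (α+1) = (-(α+1)) * (n:ℝ) by ring, Real.rpow_mul (by norm_num),
      Real.rpow_natCast]
    congr 1
    rw [hqr_def, Real.inv_rpow (by norm_num), Real.rpow_neg (by norm_num)]
  have hRHS : (∑' n : ℕ, ENNReal.ofReal ((2 : ℝ) ^ (-(n : ℝ) * (α + 1)) *
      (∑ k ∈ Finset.Ico (2 ^ n) (2 ^ (n + 1)), c k) ^ p)) = A := by
    rw [hA_def]
    refine tsum_congr fun n => ?_
    have htn : 0 ≤ ∑ k ∈ Finset.Ico (2^n) (2^(n+1)), c k := Finset.sum_nonneg fun k _ => hc k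
    rw [ENNReal.ofReal_mul (by positivity), hq2 n, ENNReal.ofReal_pow hqr0.le,
      ← ENNReal.ofReal_rpow_of_nonneg htn hp',
      ENNReal.ofReal_sum_of_nonneg (fun i _ => hc i)]
  -- LHS rewrite
  have hLHS : (∫⁻ r in Set.Ioo (0:ℝ) 1,
      ENNReal.ofReal ((∑' k : ℕ, c k * r ^ k) ^ p * (1 - r) ^ α))
      = ∫⁻ r in Set.Ico (0:ℝ) 1, Φ r := by
    rw [setLIntegral_congr (Ioo_ae_eq_Ico (μ := volume) (a := (0:ℝ)) (b := 1))]
    refine lintegral_congr_ae ((ae_restrict_iff' measurableSet_Ico).2 (ae_of_all _ ?_))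
    intro r hr
    obtain ⟨hr0, hr1⟩ := hr
    have hsum := hrad r hr0 hr1
    have hnn : ∀ k, 0 ≤ c k * r ^ k := fun k => mul_nonneg (hc k) (pow_nonneg hr0 k)
    have hfnn : 0 ≤ ∑' k, c k * r ^ k := tsum_nonneg hnn
    simp only [hΦ_def]
    have hFr : ENNReal.ofReal (∑' k, c k * r ^ k) = F r := by
      rw [ENNReal.ofReal_tsum_of_nonneg hnn hsum]
      simp only [hF_def, hCf_def]
      exact tsum_congr fun k => by rw [ENNReal.ofReal_mul (hc k), ENNReal.ofReal_pow hr0]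
    rw [ENNReal.ofReal_mul (Real.rpow_nonneg hfnn p),
      ← ENNReal.ofReal_rpow_of_nonneg hfnn hp', hFr]
  -- dyadic partition
  have hUnion : Set.Ico (0:ℝ) 1 = ⋃ n, Set.Ico (xs n) (xs (n+1)) := by
    ext r
    simp only [Set.mem_iUnion, Set.mem_Ico]
    constructor
    · rintro ⟨hr0, hr1⟩
      have h1r0 : 0 < 1 - r := by linarith
      have hex : ∃ n : ℕ, (2:ℝ)⁻¹ ^ (n+1) < 1 - r := by
        obtain ⟨n, hn⟩ := exists_pow_lt_of_lt_one h1r0 (by norm_num : (2:ℝ)⁻¹ < 1)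
        exact ⟨n, lt_of_le_of_lt
          (pow_le_pow_of_le_one (by norm_num) (by norm_num) (Nat.le_succ n)) hn⟩
      refine ⟨Nat.find hex, ?_, ?_⟩
      · rcases Nat.eq_zero_or_pos (Nat.find hex) with h0 | hpos
        · rw [h0]; simpa [hxs_def] using hr0
        · have hmin := Nat.find_min hex (Nat.sub_lt hpos one_pos)
          rw [show Nat.find hex - 1 + 1 = Nat.find hex by omega] at hmin
          push_neg at hmin
          simp only [hxs_def]
          linarith
      · have hspec := Nat.find_spec hex
        simp only [hxs_def]
        linarith
    · rintro ⟨n, hn1, hn2⟩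
      exact ⟨le_trans (hxs0 n) hn1, lt_of_lt_of_le hn2 (hxs1 (n+1)).le⟩
  have hdisj : Pairwise (Function.onFun Disjoint (fun n => Set.Ico (xs n) (xs (n+1)))) := by
    have key : ∀ m n : ℕ, m < n →
        Disjoint (Set.Ico (xs m) (xs (m+1))) (Set.Ico (xs n) (xs (n+1))) := by
      intro m n hmn
      refine Set.disjoint_left.2 fun r hrm hrn => ?_
      exact absurd (lt_of_lt_of_le hrm.2 (hxsmono (by omega : m+1 ≤ n))) (not_lt.2 hrn.1)
    intro m n hmn
    rcases lt_or_gt_of_ne hmn with h | h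
    · exact key m n h
    · exact (key n m h).symm
  have hJsum : ∫⁻ r in Set.Ico (0:ℝ) 1, Φ r
      = ∑' n, ∫⁻ r in Set.Ico (xs n) (xs (n+1)), Φ r := by
    rw [hUnion, lintegral_iUnion (fun n => measurableSet_Ico) hdisj]
  -- window bounds
  have hzfacts : ∀ n : ℕ, ∀ r ∈ Set.Ico (xs n) (xs (n+1)),
      (1-r)^α = ((1-r) * 2^n)^α * yr^n ∧ (2:ℝ)⁻¹ ≤ (1-r) * 2^n ∧ (1-r) * 2^n ≤ 1 := by
    intro n r hr
    obtain ⟨hr1, hr2⟩ := hr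
    have hA1 : 1 - r ≤ 2⁻¹ ^ n := by simp only [hxs_def] at hr1; linarith
    have hA2 : (2:ℝ)⁻¹ ^ (n+1) ≤ 1 - r := by simp only [hxs_def] at hr2; linarith
    have h1r0 : (0:ℝ) < 1 - r := lt_of_lt_of_le (hhalf (n+1)) hA2
    have hz1 : (1-r) * 2^n ≤ 1 := by
      calc (1-r) * 2^n ≤ 2⁻¹^n * 2^n := mul_le_mul_of_nonneg_right hA1 (by positivity)
        _ = 1 := by rw [← mul_pow]; norm_num
    have hz2 : (2:ℝ)⁻¹ ≤ (1-r) * 2^n := by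
      calc (2:ℝ)⁻¹ = 2⁻¹^(n+1) * 2^n := by
            rw [pow_succ, mul_comm ((2:ℝ)⁻¹^n) 2⁻¹, mul_assoc, ← mul_pow]; norm_num
        _ ≤ (1-r) * 2^n := mul_le_mul_of_nonneg_right hA2 (by positivity)
    refine ⟨?_, hz2, hz1⟩
    have hr_eq : 1 - r = ((1-r) * 2^n) * 2⁻¹ ^ n := by
      rw [mul_assoc, ← mul_pow]; norm_num
    calc (1-r)^α = (((1-r) * 2^n) * 2⁻¹ ^ n)^α := by rw [← hr_eq]
      _ = ((1-r) * 2^n)^α * (2⁻¹^n)^α := Real.mul_rpow (by positivity) (by positivity)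
      _ = ((1-r) * 2^n)^α * yr^n := by
          rw [MP_real_pow_rpow_comm _ (by norm_num) n α, hyr_def]
  have hwin_ub : ∀ n : ℕ, ∀ r ∈ Set.Ico (xs n) (xs (n+1)),
      (1-r)^α ≤ (2:ℝ)^|α| * yr^n := by
    intro n r hr
    obtain ⟨heq, hz2, hz1⟩ := hzfacts n r hr
    rw [heq]
    exact mul_le_mul_of_nonneg_right (MP_aux_window_hi α _ hz2 hz1) (by positivity)
  have hwin_lb : ∀ n : ℕ, ∀ r ∈ Set.Ico (xs n) (xs (n+1)),
      (2:ℝ)^(-|α|) * yr^n ≤ (1-r)^α := by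
    intro n r hr
    obtain ⟨heq, hz2, hz1⟩ := hzfacts n r hr
    rw [heq]
    exact mul_le_mul_of_nonneg_right (MP_aux_window_lo α _ hz2 hz1) (by positivity)
  -- monotonicity of F
  have hFmono : ∀ ⦃r s : ℝ⦄, r ≤ s → F r ≤ F s := by
    intro r s hrs
    refine ENNReal.tsum_le_tsum fun k => ?_
    exact mul_le_mul_right (pow_le_pow_left' (ENNReal.ofReal_le_ofReal hrs) k) _
  -- piece bounds
  have hvol : ∀ n : ℕ, volume (Set.Ico (xs n) (xs (n+1))) = ENNReal.ofReal (2⁻¹^(n+1)) := by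
    intro n
    rw [Real.volume_Ico]
    congr 1
    simp only [hxs_def]
    ring
  have hcomb : ∀ (w : ℝ) (n : ℕ), 0 ≤ w →
      ENNReal.ofReal (w * yr^n) * ENNReal.ofReal ((2:ℝ)⁻¹^(n+1))
        = ENNReal.ofReal (w * 2⁻¹) * q^n := by
    intro w n hw
    rw [← ENNReal.ofReal_mul (by positivity), hq_def, ← ENNReal.ofReal_pow hqr0.le,
      ← ENNReal.ofReal_mul (by positivity)]
    congr 1
    rw [hyrq, mul_pow, pow_succ]
    ring
  have hIub : ∀ n : ℕ, (∫⁻ r in Set.Ico (xs n) (xs (n+1)), Φ r)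
      ≤ ENNReal.ofReal ((2:ℝ)^|α| * 2⁻¹) * (q^n * G (n+1) ^ p) := by
    intro n
    have hpt : ∀ r ∈ Set.Ico (xs n) (xs (n+1)),
        Φ r ≤ G (n+1) ^ p * ENNReal.ofReal ((2:ℝ)^|α| * yr^n) := by
      intro r hr
      simp only [hΦ_def, hG_def]
      refine mul_le_mul' ?_ ?_
      · exact ENNReal.rpow_le_rpow (hFmono (le_of_lt hr.2)) hp'
      · exact ENNReal.ofReal_le_ofReal (hwin_ub n r hr)
    calc ∫⁻ r in Set.Ico (xs n) (xs (n+1)), Φ r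
        ≤ ∫⁻ _ in Set.Ico (xs n) (xs (n+1)),
            (G (n+1) ^ p * ENNReal.ofReal ((2:ℝ)^|α| * yr^n)) :=
          lintegral_mono_ae ((ae_restrict_iff' measurableSet_Ico).2 (ae_of_all _ hpt))
      _ = G (n+1) ^ p * ENNReal.ofReal ((2:ℝ)^|α| * yr^n)
            * volume (Set.Ico (xs n) (xs (n+1))) := setLIntegral_const _ _
      _ = ENNReal.ofReal ((2:ℝ)^|α| * 2⁻¹) * (q^n * G (n+1) ^ p) := by
          rw [hvol n, mul_assoc, hcomb _ n (by positivity)]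
          ring
  have hIlb : ∀ n : ℕ, ENNReal.ofReal ((2:ℝ)^(-|α|) * 2⁻¹) * (q^n * G n ^ p)
      ≤ ∫⁻ r in Set.Ico (xs n) (xs (n+1)), Φ r := by
    intro n
    have hpt : ∀ r ∈ Set.Ico (xs n) (xs (n+1)),
        G n ^ p * ENNReal.ofReal ((2:ℝ)^(-|α|) * yr^n) ≤ Φ r := by
      intro r hr
      simp only [hΦ_def, hG_def]
      refine mul_le_mul' ?_ ?_
      · exact ENNReal.rpow_le_rpow (hFmono hr.1) hp'
      · exact ENNReal.ofReal_le_ofReal (hwin_lb n r hr)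
    calc ENNReal.ofReal ((2:ℝ)^(-|α|) * 2⁻¹) * (q^n * G n ^ p)
        = G n ^ p * ENNReal.ofReal ((2:ℝ)^(-|α|) * yr^n)
            * volume (Set.Ico (xs n) (xs (n+1))) := by
          rw [hvol n, mul_assoc, hcomb _ n (by positivity)]
          ring
      _ = ∫⁻ _ in Set.Ico (xs n) (xs (n+1)),
            (G n ^ p * ENNReal.ofReal ((2:ℝ)^(-|α|) * yr^n)) := (setLIntegral_const _ _).symm
      _ ≤ ∫⁻ r in Set.Ico (xs n) (xs (n+1)), Φ r :=
          lintegral_mono_ae ((ae_restrict_iff' measurableSet_Ico).2 (ae_of_all _ hpt))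
  -- shifted sum
  have hshift : ∑' n, q^n * G (n+1) ^ p ≤ q⁻¹ * S := by
    have h1 : ∀ n : ℕ, q^n * G (n+1)^p = q⁻¹ * (q^(n+1) * G (n+1)^p) := by
      intro n
      rw [pow_succ, show q⁻¹ * (q ^ n * q * G (n+1) ^ p)
        = (q⁻¹ * q) * (q^n * G (n+1)^p) by ring, ENNReal.inv_mul_cancel hq0 hqtop, one_mul]
    simp_rw [h1]
    rw [ENNReal.tsum_mul_left]
    refine mul_le_mul_right ?_ _
    rw [hS_def]
    have hh := Summable.sum_add_tsum_nat_add' (M := ℝ≥0∞) (f := fun n => q^n * G n ^ p) (k := 1)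
      ENNReal.summable
    rw [← hh]
    exact le_add_self
  have hSJ : ENNReal.ofReal ((2:ℝ)^(-|α|) * 2⁻¹) * S ≤ ∫⁻ r in Set.Ico (0:ℝ) 1, Φ r := by
    rw [hJsum, hS_def, ← ENNReal.tsum_mul_left]
    exact ENNReal.tsum_le_tsum hIlb
  have hJS : (∫⁻ r in Set.Ico (0:ℝ) 1, Φ r)
      ≤ ENNReal.ofReal ((2:ℝ)^|α| * 2⁻¹) * (q⁻¹ * S) := by
    rw [hJsum]
    calc ∑' n, ∫⁻ r in Set.Ico (xs n) (xs (n+1)), Φ r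
        ≤ ∑' n, ENNReal.ofReal ((2:ℝ)^|α| * 2⁻¹) * (q^n * G (n+1) ^ p) :=
          ENNReal.tsum_le_tsum hIub
      _ = ENNReal.ofReal ((2:ℝ)^|α| * 2⁻¹) * ∑' n, q^n * G (n+1) ^ p :=
          ENNReal.tsum_mul_left
      _ ≤ _ := mul_le_mul_right hshift _
  -- P2 : S < ⊤ → A < ⊤
  have hP2 : S < ⊤ → A < ⊤ := by
    intro hS
    have hquarter : ∀ n : ℕ, ENNReal.ofReal (1/4 : ℝ) * T n ≤ G (n+1) := by
      intro n
      have hx4 : ENNReal.ofReal (1/4:ℝ) ≤ (ENNReal.ofReal (xs (n+1))) ^ (2^(n+1)) := by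
        rw [← ENNReal.ofReal_pow (hxs0 _)]
        refine ENNReal.ofReal_le_ofReal ?_
        simpa [hxs_def] using MP_aux_quarter (n+1) (by omega)
      calc ENNReal.ofReal (1/4:ℝ) * T n
          ≤ (ENNReal.ofReal (xs (n+1)))^(2^(n+1)) * T n := mul_le_mul_left hx4 _
        _ = ∑ k ∈ Finset.Ico (2^n) (2^(n+1)),
              Cf k * (ENNReal.ofReal (xs (n+1)))^(2^(n+1)) := by
            rw [hT_def, mul_comm, Finset.sum_mul]
        _ ≤ ∑ k ∈ Finset.Ico (2^n) (2^(n+1)), Cf k * (ENNReal.ofReal (xs (n+1)))^k := by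
            refine Finset.sum_le_sum fun k hk => ?_
            refine mul_le_mul_right ?_ _
            exact pow_le_pow_right_of_le_one' (ENNReal.ofReal_le_one.2 (hxs1 _).le)
              (Finset.mem_Ico.1 hk).2.le
        _ ≤ G (n+1) := ENNReal.sum_le_tsum _
    have hT4 : ∀ n, T n ≤ 4 * G (n+1) := by
      intro n
      have h4 : (4:ℝ≥0∞) * ENNReal.ofReal (1/4:ℝ) = 1 := by
        rw [show (4:ℝ≥0∞) = ENNReal.ofReal (4:ℝ) by simp,
          ← ENNReal.ofReal_mul (by norm_num)]
        norm_num
      calc T n = (4 * ENNReal.ofReal (1/4:ℝ)) * T n := by rw [h4, one_mul]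
        _ = 4 * (ENNReal.ofReal (1/4:ℝ) * T n) := by ring
        _ ≤ 4 * G (n+1) := mul_le_mul_right (hquarter n) _
    have hbound : A ≤ (4:ℝ≥0∞)^p * (q⁻¹ * S) := by
      rw [hA_def]
      have step1 : ∑' n, q^n * T n ^ p ≤ ∑' n, q^n * ((4:ℝ≥0∞)^p * G (n+1)^p) := by
        refine ENNReal.tsum_le_tsum fun n => mul_le_mul_right ?_ _
        rw [← ENNReal.mul_rpow_of_nonneg _ _ hp']
        exact ENNReal.rpow_le_rpow (hT4 n) hp'
      have step2 : ∑' n, q^n * ((4:ℝ≥0∞)^p * G (n+1)^p)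
          = (4:ℝ≥0∞)^p * ∑' n, q^n * G (n+1)^p := by
        rw [← ENNReal.tsum_mul_left]
        exact tsum_congr fun n => by ring
      exact le_trans step1 (le_trans (le_of_eq step2) (mul_le_mul_right hshift _))
    refine lt_of_le_of_lt hbound (ENNReal.mul_lt_top ?_ (ENNReal.mul_lt_top ?_ hS))
    · exact ENNReal.rpow_lt_top_of_nonneg hp' (by norm_num)
    · exact ENNReal.inv_lt_top.2 (pos_iff_ne_zero.2 hq0)
  -- P3 : A < ⊤ → S < ⊤
  have hP3 : A < ⊤ → S < ⊤ := by
    intro hA'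
    set X : ℕ → ℝ≥0∞ := fun n => ENNReal.ofReal (xs n) with hX_def
    have hX1 : ∀ n, X n ≤ 1 := fun n => ENNReal.ofReal_le_one.2 (hxs1 n).le
    have hXpow1 : ∀ n m : ℕ, X n ^ (2^m) ≤ 1 := fun n m => pow_le_one' (hX1 n) _
    have hXexp : ∀ s : ℝ, 0 < s → ∀ n m : ℕ, n < m →
        (X n ^ (2^m)) ^ s ≤ ENNReal.ofReal (Real.exp (-(s * 2^(m-n)))) := by
      intro s hs n m hnm
      have h2 : (2:ℝ)⁻¹^n * ((2^m : ℕ) : ℝ) = (2:ℝ)^(m-n) := by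
        push_cast
        rw [show m = (m-n) + n by omega, pow_add,
          mul_comm ((2:ℝ)^(m-n)) ((2:ℝ)^n), ← mul_assoc, ← mul_pow]
        norm_num
      have h0 : X n ^ (2^m) ≤ ENNReal.ofReal (Real.exp (-((2:ℝ)^(m-n)))) := by
        simp only [hX_def]
        rw [← ENNReal.ofReal_pow (hxs0 n)]
        refine ENNReal.ofReal_le_ofReal ?_
        calc (xs n)^(2^m) = (1 - (2:ℝ)⁻¹^n)^(2^m) := by simp only [hxs_def]
          _ ≤ Real.exp (-((2:ℝ)⁻¹^n * ((2^m : ℕ) : ℝ))) := MP_aux_exp n (2^m)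
          _ = Real.exp (-((2:ℝ)^(m-n))) := by rw [h2]
      calc (X n ^ (2^m)) ^ s ≤ (ENNReal.ofReal (Real.exp (-((2:ℝ)^(m-n))))) ^ s :=
          ENNReal.rpow_le_rpow h0 hs.le
        _ = ENNReal.ofReal ((Real.exp (-((2:ℝ)^(m-n)))) ^ s) :=
          ENNReal.ofReal_rpow_of_nonneg (Real.exp_nonneg _) hs.le
        _ = ENNReal.ofReal (Real.exp (-(s * 2^(m-n)))) := by
          rw [← Real.exp_mul]
          congr 1
          ring
    set Hh : ℕ → ℝ≥0∞ := fun n => ∑' m, T m * X n ^ (2^m) with hH_def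
    have hGH : ∀ n, G n ≤ Cf 0 + Hh n := by
      intro n
      have hGn : G n = ∑' k, Cf k * X n ^ k := by simp only [hG_def, hF_def, hX_def]
      rw [hGn, MP_block_tsum (fun k => Cf k * X n ^ k)]
      refine add_le_add (by simp) ?_
      simp only [hH_def]
      refine ENNReal.tsum_le_tsum fun m => ?_
      calc ∑ k ∈ Finset.Ico (2^m) (2^(m+1)), Cf k * X n ^ k
          ≤ ∑ k ∈ Finset.Ico (2^m) (2^(m+1)), Cf k * X n ^ (2^m) := by
            refine Finset.sum_le_sum fun k hk => mul_le_mul_right ?_ _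
            exact pow_le_pow_right_of_le_one' (hX1 n) (Finset.mem_Ico.1 hk).1
        _ = T m * X n ^ (2^m) := by rw [hT_def, Finset.sum_mul]
    set M : ℝ≥0∞ := ∑' n, q^n * Hh n ^ p with hM_def
    have hSM : S ≤ (2:ℝ≥0∞)^p * (Cf 0 ^ p * (1-q)⁻¹ + M) := by
      have step1 : S ≤ ∑' n, q^n * ((2:ℝ≥0∞)^p * (Cf 0 ^ p + Hh n ^ p)) := by
        rw [hS_def]
        refine ENNReal.tsum_le_tsum fun n => mul_le_mul_right ?_ _
        exact le_trans (ENNReal.rpow_le_rpow (hGH n) hp') (MP_add_rpow _ _ hp')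
      have step2 : ∑' n, q^n * ((2:ℝ≥0∞)^p * (Cf 0 ^ p + Hh n ^ p))
          = (2:ℝ≥0∞)^p * (Cf 0 ^ p * ∑' n, q^n + M) := by
        rw [hM_def]
        have he : ∀ n : ℕ, q^n * ((2:ℝ≥0∞)^p * (Cf 0 ^ p + Hh n ^ p))
            = (2:ℝ≥0∞)^p * (Cf 0 ^ p * q^n + q^n * Hh n ^ p) := fun n => by ring
        simp_rw [he]
        rw [ENNReal.tsum_mul_left, ENNReal.tsum_add, ENNReal.tsum_mul_left]
      rw [step2, hgeo] at step1
      exact step1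
    have hMfin : M < ⊤ := by
      rcases le_or_gt p 1 with hple | hpgt
      · -- p ≤ 1 : subadditivity
        obtain ⟨Db, hDb, hDbound⟩ := MP_head_bound (qr := qr) (b := 1) (s := p)
          hqr0 zero_le_one hp
        have hW : ∀ m : ℕ, (∑' n, q^n * (X n ^ (2^m))^p) ≤ q^m * (Db + (1-q)⁻¹) := by
          intro m
          have hsplit := Summable.sum_add_tsum_nat_add' (M := ℝ≥0∞)
            (f := fun n => q^n * (X n ^ (2^m))^p) (k := m) ENNReal.summable
          rw [← hsplit, mul_add]
          refine add_le_add ?_ ?_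
          · refine hDbound m _ fun n hnm => ?_
            rw [hq_def, one_pow, one_mul]
            exact mul_le_mul_right (hXexp p hp n m hnm) _
          · refine MP_tail_bound (u := q) _ _ fun j => ?_
            calc q^(j+m) * (X (j+m) ^ (2^m))^p
                ≤ q^(j+m) * 1 := mul_le_mul_right (ENNReal.rpow_le_one (hXpow1 _ _) hp') _
              _ = q^m * q^j := by rw [mul_one, pow_add, mul_comm]
        have hMle : M ≤ ∑' m, T m ^ p * (q^m * (Db + (1-q)⁻¹)) := by
          rw [hM_def]
          have s1 : ∀ n : ℕ, q^n * Hh n ^ p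
              ≤ ∑' m, q^n * (T m ^ p * (X n ^ (2^m))^p) := by
            intro n
            rw [ENNReal.tsum_mul_left]
            refine mul_le_mul_right ?_ _
            simp only [hH_def]
            refine le_trans (MP_tsum_rpow_le _ hp hple) (le_of_eq (tsum_congr fun m => ?_))
            exact ENNReal.mul_rpow_of_nonneg _ _ hp'
          calc ∑' n, q^n * Hh n ^ p
              ≤ ∑' n, ∑' m, q^n * (T m ^ p * (X n ^ (2^m))^p) := ENNReal.tsum_le_tsum s1
            _ = ∑' m, ∑' n, q^n * (T m ^ p * (X n ^ (2^m))^p) := ENNReal.tsum_comm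
            _ = ∑' m, T m ^ p * ∑' n, q^n * (X n ^ (2^m))^p := by
                refine tsum_congr fun m => ?_
                rw [← ENNReal.tsum_mul_left]
                exact tsum_congr fun n => by ring
            _ ≤ _ := ENNReal.tsum_le_tsum fun m => mul_le_mul_right (hW m) _
        have hfinal : M ≤ (Db + (1-q)⁻¹) * A := by
          refine le_trans hMle (le_of_eq ?_)
          rw [hA_def, ← ENNReal.tsum_mul_left]
          exact tsum_congr fun m => by ring
        refine lt_of_le_of_lt hfinal (ENNReal.mul_lt_top ?_ hA')
        exact ENNReal.add_lt_top.2 ⟨lt_top_iff_ne_top.2 hDb, lt_top_iff_ne_top.2 hgeo_top⟩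
      · -- p > 1 : Hoelder
        set p2 : ℝ := p / (p - 1) with hp2_def
        have hpq : p.HolderConjugate p2 := Real.HolderConjugate.conjExponent hpgt
        have hp20 : 0 ≤ p2 := hpq.symm.nonneg
        have hp2pos : 0 < p2 := hpq.symm.pos
        have hpm1 : 0 < p - 1 := by linarith
        set σr : ℝ := (2:ℝ)⁻¹ ^ ((α+1)/(2*p)) with hσr_def
        have hσr0 : 0 < σr := Real.rpow_pos_of_pos (by norm_num) _
        have hσr1 : σr < 1 := Real.rpow_lt_one (by norm_num) (by norm_num) (by positivity)
        set qhr : ℝ := (2:ℝ)⁻¹ ^ ((α+1)/2) with hqhr_def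
        have hqhr0 : 0 < qhr := Real.rpow_pos_of_pos (by norm_num) _
        have hqhr1 : qhr < 1 := Real.rpow_lt_one (by norm_num) (by norm_num) (by positivity)
        have hσp : σr ^ p = qhr := by
          rw [hσr_def, hqhr_def, ← Real.rpow_mul (by norm_num)]
          congr 1
          field_simp
        have hqq : qhr * qhr = qr := by
          rw [hqhr_def, hqr_def, ← Real.rpow_add (by norm_num : (0:ℝ) < 2⁻¹)]
          congr 1
          ring
        have hqhrq : qr * qhr⁻¹ = qhr := by
          rw [← hqq]
          field_simp
        set Qh : ℝ≥0∞ := ENNReal.ofReal qhr with hQh_def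
        have hQh1 : Qh < 1 := ENNReal.ofReal_lt_one.2 hqhr1
        have hQhtop : (1 - Qh)⁻¹ ≠ ⊤ := by
          rw [Ne, ENNReal.inv_eq_top, tsub_eq_zero_iff_le]
          exact not_le.2 hQh1
        set τ : ℝ≥0∞ := ENNReal.ofReal qhr⁻¹ with hτ_def
        have hqτ : q * τ = Qh := by
          rw [hq_def, hτ_def, hQh_def, ← ENNReal.ofReal_mul hqr0.le, hqhrq]
        set σ : ℝ≥0∞ := ENNReal.ofReal σr with hσ_def
        set σi : ℝ≥0∞ := ENNReal.ofReal σr⁻¹ with hσi_def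
        have hσσ : σi * σ = 1 := by
          rw [hσ_def, hσi_def, ← ENNReal.ofReal_mul (inv_nonneg.2 hσr0.le),
            inv_mul_cancel₀ hσr0.ne']
          exact ENNReal.ofReal_one
        have hσip : σi ^ p = τ := by
          rw [hσi_def, hτ_def, ENNReal.ofReal_rpow_of_nonneg (inv_nonneg.2 hσr0.le) hp']
          congr 1
          rw [Real.inv_rpow hσr0.le, hσp]
        set Q2 : ℝ≥0∞ := ENNReal.ofReal (σr ^ p2) with hQ2_def
        have hQ2lt : Q2 < 1 :=
          ENNReal.ofReal_lt_one.2 (Real.rpow_lt_one hσr0.le hσr1 hp2pos)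
        have hσp2 : σ ^ p2 = Q2 := by
          rw [hσ_def, hQ2_def, ENNReal.ofReal_rpow_of_nonneg hσr0.le hp20]
        set K0 : ℝ≥0∞ := 2 * (1 - Q2)⁻¹ with hK0_def
        have hK0top : K0 ≠ ⊤ := by
          rw [hK0_def]
          refine ENNReal.mul_ne_top (by norm_num) ?_
          rw [Ne, ENNReal.inv_eq_top, tsub_eq_zero_iff_le]
          exact not_le.2 hQ2lt
        have hHold : ∀ n : ℕ, Hh n ^ p ≤
            (∑' m, T m ^ p * (X n ^ (2^m)) ^ (2⁻¹ * p) * τ ^ ((m - n) + (n - m)))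
              * K0 ^ (p-1) := by
          intro n
          set Y : ℕ → ℝ≥0∞ := fun m => (X n ^ (2^m)) ^ ((2:ℝ)⁻¹) with hY_def
          have hY1 : ∀ m, Y m ≤ 1 := fun m => ENNReal.rpow_le_one (hXpow1 n m) (by norm_num)
          set a : ℕ → ℝ≥0∞ := fun m => T m * Y m * σi ^ ((m - n) + (n - m)) with ha_def
          set b : ℕ → ℝ≥0∞ := fun m => σ ^ ((m - n) + (n - m)) * Y m with hb_def
          have hab : ∀ m, a m * b m = T m * X n ^ (2^m) := by
            intro m
            have hYY : Y m * Y m = X n ^ (2^m) := by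
              simp only [hY_def]
              rw [← ENNReal.rpow_add_of_nonneg _ _ (by norm_num) (by norm_num)]
              norm_num
            calc a m * b m
                = (T m * (Y m * Y m)) * (σi ^ ((m - n) + (n - m)) * σ ^ ((m - n) + (n - m))) := by
                  simp only [ha_def, hb_def]
                  ring
              _ = T m * X n ^ (2^m) := by
                  rw [hYY, ← mul_pow, hσσ, one_pow, mul_one]
          have hH_eq : Hh n = ∑' m, (a * b) m := by
            simp only [hH_def, Pi.mul_apply]
            exact (tsum_congr hab).symm
          have hkey := ENNReal.lintegral_mul_le_Lp_mul_Lq (Measure.count (α := ℕ)) hpq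
            (measurable_of_countable a).aemeasurable (measurable_of_countable b).aemeasurable
          rw [lintegral_count, lintegral_count, lintegral_count] at hkey
          have hbsum : ∑' m, b m ^ p2 ≤ K0 := by
            have hb1 : ∀ m, b m ^ p2 ≤ Q2 ^ ((m - n) + (n - m)) := by
              intro m
              simp only [hb_def]
              rw [ENNReal.mul_rpow_of_nonneg _ _ hp20,
                MP_pow_rpow_comm σ ((m - n) + (n - m)) p2, hσp2]
              calc Q2 ^ ((m - n) + (n - m)) * Y m ^ p2
                  ≤ Q2 ^ ((m - n) + (n - m)) * 1 :=
                    mul_le_mul_right (ENNReal.rpow_le_one (hY1 m) hp20) _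
                _ = _ := mul_one _
            exact le_trans (ENNReal.tsum_le_tsum hb1) (by rw [hK0_def]; exact MP_geom_abs Q2 n)
          have hHle : Hh n ≤ (∑' m, a m ^ p)^(1/p) * K0 ^ (1/p2) := by
            rw [hH_eq]
            refine le_trans hkey (mul_le_mul_right ?_ _)
            exact ENNReal.rpow_le_rpow hbsum (by positivity)
          have hexp2 : 1/p2 * p = p - 1 := by
            rw [hp2_def, one_div_div]
            field_simp
          have hHp : Hh n ^ p ≤ (∑' m, a m ^ p) * K0 ^ (p-1) := by
            refine le_trans (ENNReal.rpow_le_rpow hHle hp') (le_of_eq ?_)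
            rw [ENNReal.mul_rpow_of_nonneg _ _ hp', ← ENNReal.rpow_mul, ← ENNReal.rpow_mul,
              show 1/p * p = 1 by field_simp, hexp2, ENNReal.rpow_one]
          refine le_trans hHp (mul_le_mul_left (le_of_eq (tsum_congr fun m => ?_)) _)
          simp only [ha_def]
          rw [ENNReal.mul_rpow_of_nonneg _ _ hp', ENNReal.mul_rpow_of_nonneg _ _ hp',
            MP_pow_rpow_comm σi ((m - n) + (n - m)) p, hσip]
          simp only [hY_def]
          rw [← ENNReal.rpow_mul]
        obtain ⟨Db, hDb, hDbound⟩ := MP_head_bound (qr := qr) (b := qhr⁻¹) (s := 2⁻¹ * p)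
          hqr0 (inv_nonneg.2 hqhr0.le) (by positivity)
        have hW : ∀ m : ℕ,
            (∑' n, q^n * ((X n ^ (2^m)) ^ (2⁻¹ * p) * τ ^ ((m - n) + (n - m))))
              ≤ q^m * (Db + (1-Qh)⁻¹) := by
          intro m
          have hsplit := Summable.sum_add_tsum_nat_add' (M := ℝ≥0∞)
            (f := fun n => q^n * ((X n ^ (2^m)) ^ (2⁻¹ * p) * τ ^ ((m - n) + (n - m))))
            (k := m) ENNReal.summable
          rw [← hsplit, mul_add]
          refine add_le_add ?_ ?_
          · refine hDbound m _ fun n hnm => ?_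
            have hd : (m - n) + (n - m) = m - n := by omega
            have hτpow : τ ^ (m-n) = ENNReal.ofReal ((qhr⁻¹)^(m-n)) := by
              rw [hτ_def, ENNReal.ofReal_pow (inv_nonneg.2 hqhr0.le)]
            rw [hd, hq_def]
            refine mul_le_mul_right ?_ _
            calc (X n ^ (2^m)) ^ (2⁻¹*p) * τ ^ (m-n)
                ≤ ENNReal.ofReal (Real.exp (-(2⁻¹*p * 2^(m-n))))
                    * ENNReal.ofReal ((qhr⁻¹)^(m-n)) :=
                  mul_le_mul' (hXexp _ (by positivity) n m hnm) (le_of_eq hτpow)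
              _ = ENNReal.ofReal ((qhr⁻¹)^(m-n) * Real.exp (-(2⁻¹*p * 2^(m-n)))) := by
                  rw [← ENNReal.ofReal_mul (Real.exp_nonneg _), mul_comm]
          · refine MP_tail_bound (u := Qh) _ _ fun j => ?_
            have hd : (m - (j+m)) + ((j+m) - m) = j := by omega
            beta_reduce
            rw [hd]
            calc q^(j+m) * ((X (j+m) ^ (2^m)) ^ (2⁻¹*p) * τ ^ j)
                ≤ q^(j+m) * (1 * τ ^ j) :=
                  mul_le_mul_right
                    (mul_le_mul_left (ENNReal.rpow_le_one (hXpow1 _ _) (by positivity)) _) _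
              _ = q^m * (q * τ)^j := by
                  rw [one_mul, pow_add, mul_pow]
                  ring
              _ = q^m * Qh^j := by rw [hqτ]
        have hMle : M ≤ K0^(p-1) * ((Db + (1-Qh)⁻¹) * A) := by
          rw [hM_def]
          calc ∑' n, q^n * Hh n ^ p
              ≤ ∑' n, q^n * ((∑' m, T m ^ p * (X n ^ (2^m)) ^ (2⁻¹ * p)
                  * τ ^ ((m - n) + (n - m))) * K0^(p-1)) :=
                ENNReal.tsum_le_tsum fun n => mul_le_mul_right (hHold n) _
            _ = K0^(p-1) * ∑' n, ∑' m, q^n * (T m ^ p * ((X n ^ (2^m)) ^ (2⁻¹ * p)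
                  * τ ^ ((m - n) + (n - m)))) := by
                rw [← ENNReal.tsum_mul_left]
                refine tsum_congr fun n => ?_
                calc q^n * ((∑' m, T m ^ p * (X n ^ (2^m)) ^ (2⁻¹ * p)
                      * τ ^ ((m - n) + (n - m))) * K0^(p-1))
                    = K0^(p-1) * (q^n * ∑' m, T m ^ p * (X n ^ (2^m)) ^ (2⁻¹ * p)
                      * τ ^ ((m - n) + (n - m))) := by ring
                  _ = K0^(p-1) * ∑' m, q^n * (T m ^ p * ((X n ^ (2^m)) ^ (2⁻¹ * p)
                      * τ ^ ((m - n) + (n - m)))) := by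
                      rw [← ENNReal.tsum_mul_left]
                      exact congrArg _ (tsum_congr fun m => by ring)
            _ = K0^(p-1) * ∑' m, ∑' n, q^n * (T m ^ p * ((X n ^ (2^m)) ^ (2⁻¹ * p)
                  * τ ^ ((m - n) + (n - m)))) := by rw [ENNReal.tsum_comm]
            _ ≤ K0^(p-1) * ((Db + (1-Qh)⁻¹) * A) := by
                refine mul_le_mul_right ?_ _
                have hin : ∀ m : ℕ, ∑' n, q^n * (T m ^ p * ((X n ^ (2^m)) ^ (2⁻¹ * p)
                    * τ ^ ((m - n) + (n - m))))
                    ≤ T m ^ p * (q^m * (Db + (1-Qh)⁻¹)) := by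
                  intro m
                  have : ∑' n, q^n * (T m ^ p * ((X n ^ (2^m)) ^ (2⁻¹ * p)
                      * τ ^ ((m - n) + (n - m))))
                      = T m ^ p * ∑' n, q^n * ((X n ^ (2^m)) ^ (2⁻¹ * p)
                      * τ ^ ((m - n) + (n - m))) := by
                    rw [← ENNReal.tsum_mul_left]
                    exact tsum_congr fun n => by ring
                  rw [this]
                  exact mul_le_mul_right (hW m) _
                refine le_trans (ENNReal.tsum_le_tsum hin) (le_of_eq ?_)
                rw [hA_def, ← ENNReal.tsum_mul_left]
                exact tsum_congr fun m => by ring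
        refine lt_of_le_of_lt hMle (ENNReal.mul_lt_top ?_ (ENNReal.mul_lt_top ?_ hA'))
        · exact ENNReal.rpow_lt_top_of_nonneg (by linarith) hK0top
        · exact ENNReal.add_lt_top.2 ⟨lt_top_iff_ne_top.2 hDb, lt_top_iff_ne_top.2 hQhtop⟩
    refine lt_of_le_of_lt hSM (ENNReal.mul_lt_top ?_ (ENNReal.add_lt_top.2 ⟨?_, hMfin⟩))
    · exact ENNReal.rpow_lt_top_of_nonneg hp' (by norm_num)
    · exact ENNReal.mul_lt_top
        (ENNReal.rpow_lt_top_of_nonneg hp' ENNReal.ofReal_ne_top)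
        (lt_top_iff_ne_top.2 hgeo_top)
  rw [hRHS, hLHS]
  constructor
  · intro hJ
    refine (hP2 ?_)
    by_contra hS
    rw [not_lt, top_le_iff] at hS
    rw [hS, ENNReal.mul_top] at hSJ
    · exact absurd (top_le_iff.1 (le_trans hSJ (le_refl _))) (by
        intro h; rw [h] at hJ; exact lt_irrefl _ hJ)
    · simp only [Ne, ENNReal.ofReal_eq_zero, not_le]
      positivity
  · intro hA
    have hS := hP3 hA
    refine lt_of_le_of_lt hJS ?_
    refine ENNReal.mul_lt_top ENNReal.ofReal_lt_top ?_
    exact ENNReal.mul_lt_top (ENNReal.inv_lt_top.2 (pos_iff_ne_zero.2 hq0)) hS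
end
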